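/- Divergence of the ergodicity series under the logarithmic cooling schedule: let β₀ > 0 satisfy β₀ · N · Δ < 1, set β_l := β₀ · log(1+l) for l = 0, 1, 2, …, and let Q_l := (P_{β_l})^N be the N-step random-scan Gibbs kernel at inverse temperature β_l. Then Σ_{l=0}^∞ (1 − δ(Q_l)) = ∞. -/

import Mathlib

open Finset Filter

noncomputable section

/-- The configuration space: M×N 0-1 matrices (Bool-valued) whose every column sums to K. -/
def Config (M N K : ℕ) : Finset (Fin M → Fin N → Bool) :=
  Finset.univ.filter fun B =>
    ∀ j : Fin N, (Finset.univ.filter fun i : Fin M => B i j = true).card = K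

/-- Σ_{j∈s} B(i,j), the number of base stations in `s` caching content `i`. -/
def colCount {M N : ℕ} (B : Fin M → Fin N → Bool) (i : Fin M) (s : Finset (Fin N)) : ℕ :=
  (s.filter fun j => B i j = true).card

/-- The cache hit rate h(B) = Σ_s w(s) Σ_i λ_i 1{Σ_{j∈s} B(i,j) ≥ 1}. -/
def hitRate {M N : ℕ} (lam : Fin M → ℝ) (w : Finset (Fin N) → ℝ)
    (B : Fin M → Fin N → Bool) : ℝ :=
  ∑ s : Finset (Fin N), w s * ∑ i : Fin M, lam i * (if 1 ≤ colCount B i s then (1 : ℝ) else 0)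

/-- Columns v ∈ {0,1}^M with Σ_i v_i = K. -/
def colSet (M K : ℕ) : Finset (Fin M → Bool) :=
  Finset.univ.filter fun v => (Finset.univ.filter fun i : Fin M => v i = true).card = K

/-- x[j←v] : x with its j-th column replaced by v. -/
def updCol {M N : ℕ} (x : Fin M → Fin N → Bool) (j : Fin N) (v : Fin M → Bool) :
    Fin M → Fin N → Bool :=
  fun i j' => if j' = j then v i else x i j'

/-- The random-scan Gibbs sampling kernel P_β(x,y). -/
def kernel (M N K : ℕ) (lam : Fin M → ℝ) (w : Finset (Fin N) → ℝ) (β : ℝ)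
    (x y : Fin M → Fin N → Bool) : ℝ :=
  (1 / (N : ℝ)) * ∑ j : Fin N,
    if ∀ (i : Fin M) (j' : Fin N), j' ≠ j → x i j' = y i j' then
      Real.exp (β * hitRate lam w y) /
        ∑ v ∈ colSet M K, Real.exp (β * hitRate lam w (updCol x j v))
    else 0

/-- The random-scan Gibbs kernel as a matrix indexed by the configuration space. -/
def kernelM (M N K : ℕ) (lam : Fin M → ℝ) (w : Finset (Fin N) → ℝ) (β : ℝ) :
    Matrix ↥(Config M N K) ↥(Config M N K) ℝ :=
  Matrix.of fun x y => kernel M N K lam w β x.1 y.1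

/-- max_{B∈𝓑} h(B). -/
def maxHit (M N K : ℕ) (lam : Fin M → ℝ) (w : Finset (Fin N) → ℝ) : ℝ :=
  sSup (hitRate lam w '' ↑(Config M N K))

/-- min_{B∈𝓑} h(B). -/
def minHit (M N K : ℕ) (lam : Fin M → ℝ) (w : Finset (Fin N) → ℝ) : ℝ :=
  sInf (hitRate lam w '' ↑(Config M N K))

/-- Δ = max_{B∈𝓑} h(B) − min_{B∈𝓑} h(B). -/
def Delta (M N K : ℕ) (lam : Fin M → ℝ) (w : Finset (Fin N) → ℝ) : ℝ :=
  maxHit M N K lam w - minHit M N K lam w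

/-- Dobrushin's ergodic coefficient δ(Q) = 1 − min_{x,x'} Σ_y min(Q(x,y), Q(x',y)). -/
def dobrushin {S : Type*} [Fintype S] (Q : S → S → ℝ) : ℝ :=
  1 - sInf {r : ℝ | ∃ x x' : S, r = ∑ y : S, min (Q x y) (Q x' y)}


/-! ### Auxiliary lemmas -/

lemma card_filter_lt_fin (M K : ℕ) (hKM : K < M) :
    (Finset.univ.filter fun i : Fin M => (i : ℕ) < K).card = K := by
  apply Finset.card_eq_of_bijective (fun n hn => (⟨n, hn.trans hKM⟩ : Fin M))
  · intro a ha
    simp only [Finset.mem_filter] at ha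
    exact ⟨a.1, ha.2, Fin.ext rfl⟩
  · intro i hi; simp [hi]
  · intro i j hi hj h; simpa using congrArg Fin.val h

lemma colSet_nonempty (M K : ℕ) (hKM : K < M) : (colSet M K).Nonempty := by
  refine ⟨fun i => decide ((i : ℕ) < K), ?_⟩
  simp only [colSet, Finset.mem_filter, Finset.mem_univ, true_and]
  have h : (Finset.univ.filter fun i : Fin M => (decide ((i : ℕ) < K)) = true)
      = Finset.univ.filter fun i : Fin M => (i : ℕ) < K := by ext i; simp
  rw [h]; exact card_filter_lt_fin M K hKM

lemma config_nonempty (M N K : ℕ) (hKM : K < M) : (Config M N K).Nonempty := by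
  refine ⟨fun i _ => decide ((i : ℕ) < K), ?_⟩
  simp only [Config, Finset.mem_filter, Finset.mem_univ, true_and]
  intro j
  have h : (Finset.univ.filter fun i : Fin M => (decide ((i : ℕ) < K)) = true)
      = Finset.univ.filter fun i : Fin M => (i : ℕ) < K := by ext i; simp
  rw [h]; exact card_filter_lt_fin M K hKM

lemma minHit_le_hitRate {M N K : ℕ} {lam : Fin M → ℝ} {w : Finset (Fin N) → ℝ}
    {B : Fin M → Fin N → Bool} (hB : B ∈ Config M N K) :
    minHit M N K lam w ≤ hitRate lam w B :=
  csInf_le ((Config M N K).finite_toSet.image _).bddBelow ⟨B, hB, rfl⟩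

lemma hitRate_le_maxHit {M N K : ℕ} {lam : Fin M → ℝ} {w : Finset (Fin N) → ℝ}
    {B : Fin M → Fin N → Bool} (hB : B ∈ Config M N K) :
    hitRate lam w B ≤ maxHit M N K lam w :=
  le_csSup ((Config M N K).finite_toSet.image _).bddAbove ⟨B, hB, rfl⟩

lemma updCol_mem_config {M N K : ℕ} {x : Fin M → Fin N → Bool} {j : Fin N}
    {v : Fin M → Bool} (hx : x ∈ Config M N K) (hv : v ∈ colSet M K) :
    updCol x j v ∈ Config M N K := by
  simp only [Config, Finset.mem_filter, Finset.mem_univ, true_and] at hx ⊢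
  simp only [colSet, Finset.mem_filter, Finset.mem_univ, true_and] at hv
  intro j'
  by_cases h : j' = j
  · subst h
    rw [← hv]; congr 1; ext i; simp [updCol]
  · rw [← hx j']; congr 1; ext i; simp [updCol, h]

lemma kernel_nonneg (M N K : ℕ) (lam : Fin M → ℝ) (w : Finset (Fin N) → ℝ) (β : ℝ)
    (x y : Fin M → Fin N → Bool) : 0 ≤ kernel M N K lam w β x y := by
  unfold kernel
  apply mul_nonneg (by positivity)
  apply Finset.sum_nonneg
  intro j _
  split
  · exact div_nonneg (Real.exp_pos _).le
      (Finset.sum_nonneg fun v _ => (Real.exp_pos _).le)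
  · exact le_rfl

lemma matrix_pow_nonneg {S : Type*} [Fintype S] [DecidableEq S] (A : Matrix S S ℝ)
    (hA : ∀ x y, 0 ≤ A x y) : ∀ (n : ℕ) (x y : S), 0 ≤ (A ^ n) x y := by
  intro n
  induction n with
  | zero =>
    intro x y
    rw [pow_zero, Matrix.one_apply]
    split <;> norm_num
  | succ n ih =>
    intro x y
    rw [pow_succ, Matrix.mul_apply]
    exact Finset.sum_nonneg fun u _ => mul_nonneg (ih x u) (hA u y)

lemma matrix_pow_path_le {S : Type*} [Fintype S] [DecidableEq S] (A : Matrix S S ℝ)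
    (hA : ∀ x y, 0 ≤ A x y) (z : ℕ → S) :
    ∀ n : ℕ, (∏ t ∈ Finset.range n, A (z t) (z (t + 1))) ≤ (A ^ n) (z 0) (z n) := by
  intro n
  induction n with
  | zero => simp [Matrix.one_apply]
  | succ n ih =>
    rw [Finset.prod_range_succ, pow_succ, Matrix.mul_apply]
    calc (∏ t ∈ Finset.range n, A (z t) (z (t + 1))) * A (z n) (z (n + 1))
        ≤ (A ^ n) (z 0) (z n) * A (z n) (z (n + 1)) :=
          mul_le_mul_of_nonneg_right ih (hA _ _)
      _ ≤ ∑ u : S, (A ^ n) (z 0) u * A u (z (n + 1)) :=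
          Finset.single_le_sum
            (fun u _ => mul_nonneg (matrix_pow_nonneg A hA n (z 0) u) (hA u (z (n + 1))))
            (Finset.mem_univ (z n))

lemma kernel_step_lb (M N K : ℕ) (hKM : K < M) (lam : Fin M → ℝ) (w : Finset (Fin N) → ℝ)
    (β : ℝ) (hβ : 0 ≤ β) {x y : Fin M → Fin N → Bool}
    (hx : x ∈ Config M N K) (hy : y ∈ Config M N K) (j : Fin N)
    (hagree : ∀ (i : Fin M) (j' : Fin N), j' ≠ j → x i j' = y i j') :
    (1 / (N : ℝ)) *
        (Real.exp (β * (minHit M N K lam w - maxHit M N K lam w)) / ((colSet M K).card : ℝ))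
      ≤ kernel M N K lam w β x y := by
  have hC : (0 : ℝ) < ((colSet M K).card : ℝ) := by
    exact_mod_cast Finset.card_pos.2 (colSet_nonempty M K hKM)
  set D := ∑ v ∈ colSet M K, Real.exp (β * hitRate lam w (updCol x j v)) with hD
  have hDpos : 0 < D :=
    Finset.sum_pos (fun v _ => Real.exp_pos _) (colSet_nonempty M K hKM)
  have hDle : D ≤ ((colSet M K).card : ℝ) * Real.exp (β * maxHit M N K lam w) := by
    calc D ≤ ∑ _v ∈ colSet M K, Real.exp (β * maxHit M N K lam w) := by
          apply Finset.sum_le_sum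
          intro v hv
          exact Real.exp_le_exp.2
            (mul_le_mul_of_nonneg_left (hitRate_le_maxHit (updCol_mem_config hx hv)) hβ)
      _ = ((colSet M K).card : ℝ) * Real.exp (β * maxHit M N K lam w) := by
          rw [Finset.sum_const, nsmul_eq_mul]
  have hnum : Real.exp (β * minHit M N K lam w) ≤ Real.exp (β * hitRate lam w y) :=
    Real.exp_le_exp.2 (mul_le_mul_of_nonneg_left (minHit_le_hitRate hy) hβ)
  have hkey : Real.exp (β * (minHit M N K lam w - maxHit M N K lam w)) /
        ((colSet M K).card : ℝ) ≤ Real.exp (β * hitRate lam w y) / D := by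
    have h1 : β * (minHit M N K lam w - maxHit M N K lam w)
        = β * minHit M N K lam w - β * maxHit M N K lam w := by ring
    rw [h1, Real.exp_sub, div_div, mul_comm (Real.exp (β * maxHit M N K lam w))]
    exact div_le_div₀ (Real.exp_pos _).le hnum hDpos hDle
  unfold kernel
  have hsum : Real.exp (β * hitRate lam w y) / D ≤
      ∑ j' : Fin N,
        if ∀ (i : Fin M) (j'' : Fin N), j'' ≠ j' → x i j'' = y i j'' then
          Real.exp (β * hitRate lam w y) /
            ∑ v ∈ colSet M K, Real.exp (β * hitRate lam w (updCol x j' v))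
        else 0 := by
    have hterm : (if ∀ (i : Fin M) (j'' : Fin N), j'' ≠ j → x i j'' = y i j'' then
          Real.exp (β * hitRate lam w y) /
            ∑ v ∈ colSet M K, Real.exp (β * hitRate lam w (updCol x j v))
        else 0) = Real.exp (β * hitRate lam w y) / D := by
      rw [if_pos hagree, hD]
    rw [← hterm]
    apply Finset.single_le_sum (f := fun j' : Fin N =>
      if ∀ (i : Fin M) (j'' : Fin N), j'' ≠ j' → x i j'' = y i j'' then
          Real.exp (β * hitRate lam w y) /
            ∑ v ∈ colSet M K, Real.exp (β * hitRate lam w (updCol x j' v))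
        else 0) _ (Finset.mem_univ j)
    intro j' _
    split
    · exact div_nonneg (Real.exp_pos _).le
        (Finset.sum_nonneg fun v _ => (Real.exp_pos _).le)
    · exact le_rfl
  have hN0 : (0 : ℝ) ≤ 1 / (N : ℝ) := by positivity
  exact mul_le_mul_of_nonneg_left (le_trans hkey hsum) hN0

/-- The interpolating chain between two configurations. -/
def chainFun {M N : ℕ} (x y : Fin M → Fin N → Bool) (t : ℕ) : Fin M → Fin N → Bool :=
  fun i j => if (j : ℕ) < t then y i j else x i j

lemma chainFun_mem {M N K : ℕ} {x y : Fin M → Fin N → Bool}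
    (hx : x ∈ Config M N K) (hy : y ∈ Config M N K) (t : ℕ) :
    chainFun x y t ∈ Config M N K := by
  simp only [Config, Finset.mem_filter, Finset.mem_univ, true_and] at hx hy ⊢
  intro j
  by_cases h : (j : ℕ) < t
  · rw [← hy j]; congr 1; ext i; simp [chainFun, h]
  · rw [← hx j]; congr 1; ext i; simp [chainFun, h]

/-- under the logarithmic cooling schedule β_l = β₀ log(1+l) with
β₀ N Δ < 1, the series Σ_l (1 − δ(Q_l)) diverges, where Q_l = (P_{β_l})^N. -/
theorem cooling_schedule_ergodicity_series_diverges (M N K : ℕ) (hM : 1 ≤ M) (hN : 1 ≤ N)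
    (hK : 1 ≤ K) (hKM : K < M)
    (lam : Fin M → ℝ) (hlam : ∀ i, 0 ≤ lam i)
    (w : Finset (Fin N) → ℝ) (hw : ∀ s, 0 ≤ w s)
    (β₀ : ℝ) (hβ₀ : 0 < β₀) (hcool : β₀ * (N : ℝ) * Delta M N K lam w < 1) :
    Tendsto
      (fun n : ℕ => ∑ l ∈ Finset.range n,
        (1 - dobrushin fun x y =>
          (kernelM M N K lam w (β₀ * Real.log (1 + (l : ℝ))) ^ N) x y))
      atTop atTop := by
  classical
  -- abbreviations
  set Δ := Delta M N K lam w with hΔdef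
  have hKM' : K ≤ M := hKM.le
  obtain ⟨B₀, hB₀⟩ := config_nonempty M N K hKM
  have hΔ0 : 0 ≤ Δ := by
    have := minHit_le_hitRate (lam := lam) (w := w) hB₀
    have := hitRate_le_maxHit (lam := lam) (w := w) hB₀
    simp only [hΔdef, Delta]; linarith
  have hN0 : (0 : ℝ) < (N : ℝ) := by exact_mod_cast hN
  have hC0 : (0 : ℝ) < ((colSet M K).card : ℝ) := by
    exact_mod_cast Finset.card_pos.2 (colSet_nonempty M K hKM)
  set c : ℝ := (1 / ((N : ℝ) * ((colSet M K).card : ℝ)))^N with hcdef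
  have hc0 : 0 < c := by positivity
  -- key pointwise lower bound
  have key : ∀ l : ℕ,
      c * (1 / (1 + (l : ℝ))) ≤
        1 - dobrushin fun x y =>
          (kernelM M N K lam w (β₀ * Real.log (1 + (l : ℝ))) ^ N) x y := by
    intro l
    set β := β₀ * Real.log (1 + (l : ℝ)) with hβdef
    have hl1 : (1 : ℝ) ≤ 1 + (l : ℝ) := by
      have : (0 : ℝ) ≤ (l : ℝ) := Nat.cast_nonneg l
      linarith
    have hlog0 : 0 ≤ Real.log (1 + (l : ℝ)) := Real.log_nonneg hl1
    have hβ0 : 0 ≤ β := mul_nonneg hβ₀.le hlog0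
    set A := kernelM M N K lam w β with hAdef
    have hA : ∀ x y : ↥(Config M N K), 0 ≤ A x y := fun x y =>
      kernel_nonneg M N K lam w β x.1 y.1
    set ε : ℝ := (1 / (N : ℝ)) * (Real.exp (β * (-Δ)) / ((colSet M K).card : ℝ)) with hεdef
    have hε0 : 0 ≤ ε := by positivity
    -- every N-step transition probability is at least ε^N
    have hQ : ∀ x y : ↥(Config M N K), ε ^ N ≤ (A ^ N) x y := by
      intro x y
      -- the chain
      have hzmem : ∀ t, chainFun x.1 y.1 t ∈ Config M N K :=
        chainFun_mem x.2 y.2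
      set z : ℕ → ↥(Config M N K) := fun t => ⟨chainFun x.1 y.1 t, hzmem t⟩ with hzdef
      have hz0 : z 0 = x := by
        apply Subtype.ext
        funext i j
        simp [hzdef, chainFun]
      have hzN : z N = y := by
        apply Subtype.ext
        funext i j
        simp [hzdef, chainFun, j.isLt]
      have hstep : ∀ t ∈ Finset.range N, ε ≤ A (z t) (z (t + 1)) := by
        intro t ht
        rw [Finset.mem_range] at ht
        have hmm : β * (minHit M N K lam w - maxHit M N K lam w) = β * (-Δ) := by
          simp only [hΔdef, Delta]; ring
        have := kernel_step_lb M N K hKM lam w β hβ0 (hzmem t) (hzmem (t + 1))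
          ⟨t, ht⟩ ?_
        · rw [hεdef, ← hmm]; exact this
        · intro i j' hj'
          have hne : (j' : ℕ) ≠ t := fun h => hj' (Fin.ext h)
          simp only [chainFun]
          have h2 : ((j' : ℕ) < t + 1) ↔ ((j' : ℕ) < t) := by omega
          simp only [h2]
      calc ε ^ N = ∏ _t ∈ Finset.range N, ε := by rw [Finset.prod_const, Finset.card_range]
        _ ≤ ∏ t ∈ Finset.range N, A (z t) (z (t + 1)) :=
            Finset.prod_le_prod (fun _ _ => hε0) hstep
        _ ≤ (A ^ N) (z 0) (z N) := matrix_pow_path_le A hA z N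
        _ = (A ^ N) x y := by rw [hz0, hzN]
    -- from Q bound to Dobrushin bound
    have hQnn : ∀ x y : ↥(Config M N K), 0 ≤ (A ^ N) x y := matrix_pow_nonneg A hA N
    set y₀ : ↥(Config M N K) := ⟨B₀, hB₀⟩ with hy₀
    have hdob : ε ^ N ≤
        sInf {r : ℝ | ∃ x x' : ↥(Config M N K),
          r = ∑ y : ↥(Config M N K), min ((A ^ N) x y) ((A ^ N) x' y)} := by
      refine le_csInf ⟨∑ y : ↥(Config M N K), min ((A ^ N) y₀ y) ((A ^ N) y₀ y),
        y₀, y₀, rfl⟩ ?_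
      rintro r ⟨x, x', rfl⟩
      calc ε ^ N ≤ min ((A ^ N) x y₀) ((A ^ N) x' y₀) := le_min (hQ x y₀) (hQ x' y₀)
        _ ≤ ∑ y : ↥(Config M N K), min ((A ^ N) x y) ((A ^ N) x' y) :=
            Finset.single_le_sum
              (fun y _ => le_min (hQnn x y) (hQnn x' y)) (Finset.mem_univ y₀)
    have hone : (1 : ℝ) - dobrushin (fun x y : ↥(Config M N K) => (A ^ N) x y)
        = sInf {r : ℝ | ∃ x x' : ↥(Config M N K),
          r = ∑ y : ↥(Config M N K), min ((A ^ N) x y) ((A ^ N) x' y)} := by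
      simp [dobrushin]
    rw [hone]
    refine le_trans ?_ hdob
    -- ε^N ≥ c / (1 + l)
    have hεN : ε ^ N = c * Real.exp (-((N : ℝ) * Δ * β)) := by
      have h1 : ε = (1 / ((N : ℝ) * ((colSet M K).card : ℝ))) * Real.exp (β * (-Δ)) := by
        rw [hεdef]; ring
      rw [h1, mul_pow, ← Real.exp_nat_mul, hcdef]
      congr 1
      ring
    rw [hεN]
    have hexp : 1 / (1 + (l : ℝ)) ≤ Real.exp (-((N : ℝ) * Δ * β)) := by
      have h1l : (0 : ℝ) < 1 + (l : ℝ) := by linarith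
      have hinv : 1 / (1 + (l : ℝ)) = Real.exp (-(Real.log (1 + (l : ℝ)))) := by
        rw [Real.exp_neg, Real.exp_log h1l, one_div]
      rw [hinv]
      apply Real.exp_le_exp.2
      rw [neg_le_neg_iff]
      have : (N : ℝ) * Δ * β = (β₀ * (N : ℝ) * Δ) * Real.log (1 + (l : ℝ)) := by
        rw [hβdef]; ring
      rw [this]
      have ha1 : β₀ * (N : ℝ) * Δ ≤ 1 := hcool.le
      exact mul_le_of_le_one_left hlog0 ha1
    exact mul_le_mul_of_nonneg_left hexp hc0.le
  -- conclude via the harmonic series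
  have hharm : Tendsto (fun n : ℕ => ∑ l ∈ Finset.range n, c * (1 / (1 + (l : ℝ))))
      atTop atTop := by
    have h1 : Tendsto (fun n : ℕ => ∑ l ∈ Finset.range n, (1 / ((l : ℝ) + 1)))
        atTop atTop := Real.tendsto_sum_range_one_div_nat_succ_atTop
    have h2 : Tendsto (fun n : ℕ => c * ∑ l ∈ Finset.range n, (1 / ((l : ℝ) + 1)))
        atTop atTop := h1.const_mul_atTop hc0
    refine h2.congr fun n => ?_
    rw [Finset.mul_sum]
    exact Finset.sum_congr rfl fun l _ => by rw [add_comm (1 : ℝ) (l : ℝ)]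
  apply tendsto_atTop_mono _ hharm
  intro n
  exact Finset.sum_le_sum fun l _ => key l
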